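/- Let G be a polynomial with real coefficients, and let H be the polynomial H(ξ) = ξ · G(1 − (ξ−1)²). Then for every natural number k, (1/(2k)!) · H^{(2k)}(1) − (1/(2k+1)!) · H^{(2k+1)}(1) = 0, where F^{(j)} denotes the j-th derivative of the polynomial F. -/

import Mathlib

open Polynomial

private lemma iter_deriv_eval_one (H : Polynomial ℝ) (j : ℕ) :
    ((fun p : Polynomial ℝ => Polynomial.derivative p)^[j] H).eval 1
      = (j.factorial : ℝ) * (taylor 1 H).coeff j := by
  rw [taylor_coeff, ← Polynomial.factorial_smul_hasseDeriv]
  simp [mul_comm]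

private lemma taylor_one_eq (G : Polynomial ℝ) :
    taylor 1 (Polynomial.X * G.comp (1 - (Polynomial.X - 1) ^ 2))
      = (Polynomial.X + 1) * expand ℝ 2 (G.comp (1 - Polynomial.X)) := by
  have h : ((1 : ℝ[X]) - (X - 1) ^ 2).comp (X + C 1) = ((1 : ℝ[X]) - X).comp (X ^ 2) := by
    simp only [map_one, sub_comp, pow_comp, X_comp, one_comp]; ring
  rw [taylor_apply, mul_comp, comp_assoc, h, expand_eq_comp_X_pow, comp_assoc]
  simp

private lemma coeff_key (G : Polynomial ℝ) (k : ℕ) :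
    (taylor 1 (Polynomial.X * G.comp (1 - (Polynomial.X - 1) ^ 2))).coeff (2 * k)
      = (taylor 1 (Polynomial.X * G.comp (1 - (Polynomial.X - 1) ^ 2))).coeff (2 * k + 1) := by
  rw [taylor_one_eq]
  set E := expand ℝ 2 (G.comp (1 - Polynomial.X)) with hE
  have hodd : ∀ m, m % 2 = 1 → E.coeff m = 0 := by
    intro m hm
    rw [hE, coeff_expand (by norm_num)]
    simp [Nat.two_dvd_ne_zero.mpr hm]
  rw [add_mul, X_mul, one_mul]
  cases k with
  | zero => simp [coeff_mul_X, hodd 1 rfl]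
  | succ n =>
      have h1 : 2 * (n + 1) = (2 * n + 1) + 1 := by ring
      rw [h1]
      simp [coeff_add, coeff_mul_X, hodd (2*n+1) (by omega), hodd (2*n+1+1+1) (by omega)]

/-- second identity of Lemma 6.4: for a real polynomial `G` and
`H(ξ) = ξ · G(1 - (ξ-1)²)`, the linear functional
`(1/(2k)!) F^{(2k)}(1) - (1/(2k+1)!) F^{(2k+1)}(1)` annihilates `H`. -/
theorem derivative_lemma_second (G : Polynomial ℝ) (k : ℕ) :
    (1 / (Nat.factorial (2 * k) : ℝ)) *
        ((fun p : Polynomial ℝ => Polynomial.derivative p)^[2 * k]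
          (Polynomial.X * G.comp (1 - (Polynomial.X - 1) ^ 2))).eval 1 -
      (1 / (Nat.factorial (2 * k + 1) : ℝ)) *
        ((fun p : Polynomial ℝ => Polynomial.derivative p)^[2 * k + 1]
          (Polynomial.X * G.comp (1 - (Polynomial.X - 1) ^ 2))).eval 1 = 0 := by
  rw [iter_deriv_eval_one, iter_deriv_eval_one, ← coeff_key]
  have h1 : ((2 * k).factorial : ℝ) ≠ 0 := Nat.cast_ne_zero.mpr (Nat.factorial_ne_zero _)
  have h2 : ((2 * k + 1).factorial : ℝ) ≠ 0 := Nat.cast_ne_zero.mpr (Nat.factorial_ne_zero _)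
  field_simp
  simp
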